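/- Let n ≥ 2 and 0 < ε < 1/32. Suppose 𝒢 is a compact connected subgroup of the group of n×n complex unitary matrices and there exists a unit vector ξ ∈ ℂⁿ with |⟨Gξ, ξ⟩| ≥ 1 − ε for all G ∈ 𝒢. Then 𝒢 is reducible, i.e. there exists a linear subspace W ⊆ ℂⁿ with 0 < dim W < n such that G(W) ⊆ W for every G ∈ 𝒢. -/

import Mathlib

set_option maxHeartbeats 2000000

open Matrix Finset

namespace Stmt16

noncomputable def mE (n : ℕ) : Matrix (Fin n) (Fin n) ℂ ≃ₗ[ℂ] EuclideanSpace ℂ (Fin n × Fin n) where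
  toFun M := (WithLp.equiv 2 ((Fin n × Fin n) → ℂ)).symm (fun p => M p.1 p.2)
  invFun x := Matrix.of fun i j => x (i, j)
  map_add' _ _ := rfl
  map_smul' _ _ := rfl
  left_inv _ := rfl
  right_inv _ := rfl

lemma mE_apply {n : ℕ} (M : Matrix (Fin n) (Fin n) ℂ) (p : Fin n × Fin n) :
    mE n M p = M p.1 p.2 := rfl

lemma mE_inner {n : ℕ} (M N : Matrix (Fin n) (Fin n) ℂ) :
    (inner ℂ (mE n M) (mE n N) : ℂ) = Matrix.trace (Mᴴ * N) := by
  simp only [PiLp.inner_apply, RCLike.inner_apply, mE_apply, Matrix.trace, Matrix.diag,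
    Matrix.mul_apply, Matrix.conjTranspose_apply, Fintype.sum_prod_type]
  rw [Finset.sum_comm]
  simp only [starRingEnd_apply]
  exact Finset.sum_congr rfl fun _ _ => Finset.sum_congr rfl fun _ _ => mul_comm _ _

lemma trace_conj {n : ℕ} (A M N : Matrix (Fin n) (Fin n) ℂ) (hA : Aᴴ * A = 1) :
    Matrix.trace ((A * M * Aᴴ)ᴴ * (A * N * Aᴴ)) = Matrix.trace (Mᴴ * N) := by
  have h1 : (A * M * Aᴴ)ᴴ = A * Mᴴ * Aᴴ := by
    simp [Matrix.conjTranspose_mul, Matrix.mul_assoc]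
  have h2 : A * Mᴴ * Aᴴ * (A * N * Aᴴ) = A * (Mᴴ * N) * Aᴴ := by
    calc A * Mᴴ * Aᴴ * (A * N * Aᴴ) = A * (Mᴴ * ((Aᴴ * A) * (N * Aᴴ))) := by
          simp only [Matrix.mul_assoc]
      _ = A * (Mᴴ * N) * Aᴴ := by rw [hA, Matrix.one_mul]; simp only [Matrix.mul_assoc]
  rw [h1, h2, Matrix.trace_mul_cycle]
  rw [← Matrix.mul_assoc, hA, Matrix.one_mul]

lemma conj_vecMulVec {n : ℕ} (A : Matrix (Fin n) (Fin n) ℂ) (u : Fin n → ℂ) :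
    A * vecMulVec u (star u) * Aᴴ = vecMulVec (A *ᵥ u) (star (A *ᵥ u)) := by
  ext i j
  simp only [Matrix.mul_apply, Matrix.vecMulVec_apply, Matrix.conjTranspose_apply,
    Matrix.mulVec, dotProduct, Pi.star_apply, star_sum, Finset.sum_mul,
    Finset.mul_sum, star_mul']
  refine Finset.sum_congr rfl fun k _ => Finset.sum_congr rfl fun l _ => by ring

lemma mE_inner_vmv {n : ℕ} (u v : Fin n → ℂ) :
    (inner ℂ (mE n (vecMulVec u (star u))) (mE n (vecMulVec v (star v))) : ℂ)
      = (∑ i, (starRingEnd ℂ) (u i) * v i) * (starRingEnd ℂ) (∑ i, (starRingEnd ℂ) (u i) * v i) := by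
  simp only [PiLp.inner_apply, RCLike.inner_apply, mE_apply, vecMulVec_apply, Pi.star_apply,
    Fintype.sum_prod_type, map_sum, _root_.map_mul, RingHomCompTriple.comp_apply, starRingEnd_self_apply]
  rw [Finset.sum_mul_sum]
  refine Finset.sum_congr rfl fun i _ => Finset.sum_congr rfl fun j _ => by
    simp only [starRingEnd_apply, star_star, RingHom.id_apply]
    ring

lemma toEuclideanLin_mul {n : ℕ} (M N : Matrix (Fin n) (Fin n) ℂ) (v : EuclideanSpace ℂ (Fin n)) :
    Matrix.toEuclideanLin (M * N) v = Matrix.toEuclideanLin M (Matrix.toEuclideanLin N v) := by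
  simp [Matrix.toEuclideanLin_apply, Matrix.mulVec_mulVec]

lemma toEuclideanLin_one {n : ℕ} (v : EuclideanSpace ℂ (Fin n)) :
    Matrix.toEuclideanLin (1 : Matrix (Fin n) (Fin n) ℂ) v = v := by
  simp [Matrix.toEuclideanLin_apply, Matrix.one_mulVec]

end Stmt16

open Stmt16

/-- Let `n ≥ 2` and `0 < ε < 1/32`. Every compact connected group of
`n × n` unitary matrices with a weak `ε`-approximate fixed point is reducible: it has a
common invariant subspace `W` with `0 < dim W < n`. -/
theorem stmt_16 (n : ℕ) (hn : 2 ≤ n) (ε : ℝ) (hε : 0 < ε) (hε1 : ε < 1 / 32)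
    (G : Set (Matrix (Fin n) (Fin n) ℂ))
    (hone : (1 : Matrix (Fin n) (Fin n) ℂ) ∈ G)
    (hmul : ∀ A ∈ G, ∀ B ∈ G, A * B ∈ G)
    (hinv : ∀ A ∈ G, A⁻¹ ∈ G)
    (hunitary : ∀ A ∈ G, A ∈ Matrix.unitaryGroup (Fin n) ℂ)
    (hcompact : IsCompact G) (hconn : IsConnected G)
    (ξ : EuclideanSpace ℂ (Fin n)) (hξ : ‖ξ‖ = 1)
    (hweak : ∀ A ∈ G, 1 - ε ≤ ‖(inner ℂ ξ (Matrix.toEuclideanLin A ξ) : ℂ)‖) :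
    ∃ W : Submodule ℂ (EuclideanSpace ℂ (Fin n)),
      0 < Module.finrank ℂ W ∧ Module.finrank ℂ W < n ∧
      ∀ A ∈ G, ∀ x ∈ W, Matrix.toEuclideanLin A x ∈ W := by
  classical
  have hAu : ∀ A ∈ G, Aᴴ * A = 1 := by
    intro A hA
    have h := (hunitary A hA).1
    rwa [Matrix.star_eq_conjTranspose] at h
  set ξ' : Fin n → ℂ := fun i => ξ i with hξ'def
  set P : Matrix (Fin n) (Fin n) ℂ := Matrix.vecMulVec ξ' (star ξ') with hPdef
  have htraceP : Matrix.trace P = 1 := by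
    have h1 : Matrix.trace P = (inner ℂ ξ ξ : ℂ) := by
      simp only [hPdef, Matrix.trace, Matrix.diag, Matrix.vecMulVec_apply, Pi.star_apply,
        PiLp.inner_apply, RCLike.inner_apply, starRingEnd_apply]
      exact Finset.sum_congr rfl fun i _ => rfl
    rw [h1, inner_self_eq_norm_sq_to_K, hξ]
    norm_num
  -- the orbit of (the matrix of) the projection onto ξ, inside Euclidean space
  set F : Matrix (Fin n) (Fin n) ℂ → EuclideanSpace ℂ (Fin n × Fin n) :=
    fun A => mE n (A * P * Aᴴ) with hFdef
  have hFcont : Continuous F := by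
    have h1 : Continuous fun A : Matrix (Fin n) (Fin n) ℂ => A * P * Aᴴ :=
      (continuous_id.matrix_mul continuous_const).matrix_mul continuous_id.matrix_conjTranspose
    exact ((mE n).toLinearMap.continuous_of_finiteDimensional).comp h1
  set S : Set (EuclideanSpace ℂ (Fin n × Fin n)) := F '' G with hSdef
  set K : Set (EuclideanSpace ℂ (Fin n × Fin n)) := closure (convexHull ℝ S) with hKdef
  have hSK : S ⊆ K := (subset_convexHull ℝ S).trans subset_closure
  have hKconv : Convex ℝ K := (convex_convexHull ℝ S).closure
  have hKne : K.Nonempty := ⟨F 1, hSK ⟨1, hone, rfl⟩⟩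
  have hKcomp : IsCompact K := by
    have hSb : Bornology.IsBounded S := (hcompact.image hFcont).isBounded
    have : Bornology.IsBounded (convexHull ℝ S) := isBounded_convexHull.mpr hSb
    exact this.isCompact_closure
  -- a norm-minimizing element of K
  obtain ⟨Q, hQK, hQmin⟩ := hKcomp.exists_isMinOn hKne continuous_norm.continuousOn
  have hQle : ∀ y ∈ K, ‖Q‖ ≤ ‖y‖ := fun y hy => hQmin hy
  -- Q is fixed by conjugation
  have hfix : ∀ A ∈ G, A * ((mE n).symm Q) * Aᴴ = (mE n).symm Q := by
    intro A hA
    set T : EuclideanSpace ℂ (Fin n × Fin n) →ₗ[ℂ] EuclideanSpace ℂ (Fin n × Fin n) :=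
      { toFun := fun X => mE n (A * ((mE n).symm X) * Aᴴ)
        map_add' := by
          intro X Y
          show mE n (A * ((mE n).symm (X + Y)) * Aᴴ) =
            mE n (A * ((mE n).symm X) * Aᴴ) + mE n (A * ((mE n).symm Y) * Aᴴ)
          rw [(mE n).symm.map_add, Matrix.mul_add, Matrix.add_mul, (mE n).map_add]
        map_smul' := by
          intro c X
          show mE n (A * ((mE n).symm (c • X)) * Aᴴ) =
            c • mE n (A * ((mE n).symm X) * Aᴴ)
          rw [(mE n).symm.map_smul, Matrix.mul_smul, Matrix.smul_mul, (mE n).map_smul] }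
    have hTlin : IsLinearMap ℝ T := by
      constructor
      · exact T.map_add
      · intro r X
        have h1 : r • X = (r : ℂ) • X := RCLike.real_smul_eq_coe_smul (K := ℂ) r X
        have h2 : r • T X = (r : ℂ) • T X := RCLike.real_smul_eq_coe_smul (K := ℂ) r (T X)
        rw [h1, h2]
        exact T.map_smul _ _
    have hTcont : Continuous T := T.continuous_of_finiteDimensional
    have hTS : T '' S ⊆ S := by
      rintro _ ⟨_, ⟨B, hB, rfl⟩, rfl⟩
      refine ⟨A * B, hmul A hA B hB, ?_⟩
      show mE n ((A * B) * P * (A * B)ᴴ) = T (mE n (B * P * Bᴴ))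
      have : (A * B) * P * (A * B)ᴴ = A * (B * P * Bᴴ) * Aᴴ := by
        rw [Matrix.conjTranspose_mul]
        simp only [Matrix.mul_assoc]
      rw [this]
      show _ = mE n (A * ((mE n).symm (mE n (B * P * Bᴴ))) * Aᴴ)
      rw [(mE n).symm_apply_apply]
    have hTK : T Q ∈ K := by
      have h1 : T '' convexHull ℝ S ⊆ convexHull ℝ S := by
        rw [hTlin.image_convexHull]
        exact convexHull_mono hTS
      have h2 : T Q ∈ closure (T '' convexHull ℝ S) :=
        image_closure_subset_closure_image hTcont ⟨Q, hQK, rfl⟩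
      exact closure_mono h1 h2
    have hTnorm : ∀ X, ‖T X‖ = ‖X‖ := by
      intro X
      have h : (inner ℂ (T X) (T X) : ℂ) = (inner ℂ X X : ℂ) := by
        show (inner ℂ (mE n _) (mE n _) : ℂ) = _
        rw [mE_inner, trace_conj _ _ _ (hAu A hA), ← mE_inner, (mE n).apply_symm_apply]
      have h1 : (‖T X‖ : ℝ) ^ 2 = ‖X‖ ^ 2 := by
        rw [← inner_self_eq_norm_sq (𝕜 := ℂ), ← inner_self_eq_norm_sq (𝕜 := ℂ), h]
      calc ‖T X‖ = Real.sqrt (‖T X‖ ^ 2) := (Real.sqrt_sq (norm_nonneg _)).symm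
        _ = Real.sqrt (‖X‖ ^ 2) := by rw [h1]
        _ = ‖X‖ := Real.sqrt_sq (norm_nonneg _)
    -- minimality forces T Q = Q
    have hmid : (2⁻¹ : ℝ) • Q + (2⁻¹ : ℝ) • T Q ∈ K :=
      hKconv hQK hTK (by norm_num) (by norm_num) (by norm_num)
    have hQm : ‖Q‖ ≤ ‖(2⁻¹ : ℝ) • Q + (2⁻¹ : ℝ) • T Q‖ := hQle _ hmid
    have hsmul : ‖(2⁻¹ : ℝ) • Q + (2⁻¹ : ℝ) • T Q‖ = 2⁻¹ * ‖Q + T Q‖ := by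
      rw [← smul_add, norm_smul]
      norm_num
    have hpar := parallelogram_law_with_norm ℂ Q (T Q)
    have hTQ : ‖T Q‖ = ‖Q‖ := hTnorm Q
    have hzero : ‖Q - T Q‖ = 0 := by
      nlinarith [norm_nonneg (Q - T Q), norm_nonneg (Q + T Q), norm_nonneg Q,
        hQm, hsmul, hpar, hTQ]
    have hQTQ : T Q = Q := by
      have := norm_eq_zero.mp hzero
      have := sub_eq_zero.mp this
      exact this.symm
    have hQTQ' : mE n (A * ((mE n).symm Q) * Aᴴ) = Q := hQTQ
    have := congrArg (mE n).symm hQTQ'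
    rwa [(mE n).symm_apply_apply] at this
  set Qm : Matrix (Fin n) (Fin n) ℂ := (mE n).symm Q with hQmdef
  have hQQm : Q = mE n Qm := ((mE n).apply_symm_apply Q).symm
  have hcomm : ∀ A ∈ G, A * Qm = Qm * A := by
    intro A hA
    have h := hfix A hA
    calc A * Qm = A * Qm * (Aᴴ * A) := by rw [hAu A hA, Matrix.mul_one]
      _ = (A * Qm * Aᴴ) * A := by simp only [Matrix.mul_assoc]
      _ = Qm * A := by rw [h]
  -- the two linear functionals
  have hSB1 : ∀ X ∈ S, (1 - ε) ^ 2 ≤ ((inner ℂ (mE n P) X : ℂ)).re := by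
    rintro _ ⟨A, hA, rfl⟩
    show (1 - ε) ^ 2 ≤ ((inner ℂ (mE n P) (mE n (A * P * Aᴴ)) : ℂ)).re
    rw [hPdef, conj_vecMulVec, mE_inner_vmv]
    set d : ℂ := ∑ i, (starRingEnd ℂ) (ξ' i) * ((A *ᵥ ξ') i) with hddef
    have hd : d = (inner ℂ ξ (Matrix.toEuclideanLin A ξ) : ℂ) := by
      simp only [PiLp.inner_apply, RCLike.inner_apply]
      exact Finset.sum_congr rfl fun i _ => mul_comm _ _
    rw [Complex.mul_conj]
    have h1 : 1 - ε ≤ ‖d‖ := by rw [hd]; exact hweak A hA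
    have h2 : 0 ≤ 1 - ε := by nlinarith
    have h3 : (1 - ε) ^ 2 ≤ ‖d‖ ^ 2 := by nlinarith [norm_nonneg d]
    have h4 : ((Complex.normSq d : ℂ)).re = ‖d‖ ^ 2 := by
      rw [Complex.ofReal_re, Complex.sq_norm]
    rw [h4]
    exact h3
  have hSB2 : ∀ X ∈ S, (inner ℂ (mE n (1 : Matrix (Fin n) (Fin n) ℂ)) X : ℂ) = 1 := by
    rintro _ ⟨A, hA, rfl⟩
    show (inner ℂ (mE n 1) (mE n (A * P * Aᴴ)) : ℂ) = 1
    rw [mE_inner, Matrix.conjTranspose_one, Matrix.one_mul, Matrix.trace_mul_cycle,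
      hAu A hA, Matrix.one_mul, htraceP]
  -- transfer to Q
  have hB1conv : Convex ℝ {X : EuclideanSpace ℂ (Fin n × Fin n) |
      (1 - ε) ^ 2 ≤ ((inner ℂ (mE n P) X : ℂ)).re} := by
    refine convex_halfSpace_ge ?_ _
    constructor
    · intro X Y; rw [inner_add_right]; simp
    · intro r X
      rw [RCLike.real_smul_eq_coe_smul (K := ℂ) r X, inner_smul_right]
      simp
  have hB1closed : IsClosed {X : EuclideanSpace ℂ (Fin n × Fin n) |
      (1 - ε) ^ 2 ≤ ((inner ℂ (mE n P) X : ℂ)).re} := by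
    apply isClosed_le continuous_const
    exact Complex.continuous_re.comp (Continuous.inner continuous_const continuous_id)
  have hB2conv : Convex ℝ {X : EuclideanSpace ℂ (Fin n × Fin n) |
      (inner ℂ (mE n (1 : Matrix (Fin n) (Fin n) ℂ)) X : ℂ) = 1} := by
    have h : {X : EuclideanSpace ℂ (Fin n × Fin n) |
        (inner ℂ (mE n (1 : Matrix (Fin n) (Fin n) ℂ)) X : ℂ) = 1} =
        (fun X : EuclideanSpace ℂ (Fin n × Fin n) =>
          (inner ℂ (mE n (1 : Matrix (Fin n) (Fin n) ℂ)) X : ℂ)) ⁻¹' {1} := rfl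
    rw [h]
    refine (convex_singleton (1 : ℂ)).is_linear_preimage ?_
    constructor
    · intro X Y; rw [inner_add_right]
    · intro r X
      rw [RCLike.real_smul_eq_coe_smul (K := ℂ) r X, inner_smul_right,
        RCLike.real_smul_eq_coe_smul (K := ℂ) r, smul_eq_mul]
  have hB2closed : IsClosed {X : EuclideanSpace ℂ (Fin n × Fin n) |
      (inner ℂ (mE n (1 : Matrix (Fin n) (Fin n) ℂ)) X : ℂ) = 1} :=
    isClosed_eq (Continuous.inner continuous_const continuous_id) continuous_const
  have hQ1 : (1 - ε) ^ 2 ≤ ((inner ℂ (mE n P) Q : ℂ)).re :=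
    closure_minimal (convexHull_min hSB1 hB1conv) hB1closed hQK
  have hQ2 : (inner ℂ (mE n (1 : Matrix (Fin n) (Fin n) ℂ)) Q : ℂ) = 1 :=
    closure_minimal (convexHull_min hSB2 hB2conv) hB2closed hQK
  have htrQm : Matrix.trace Qm = 1 := by
    have := hQ2
    rw [hQQm, mE_inner, Matrix.conjTranspose_one, Matrix.one_mul] at this
    exact this
  have hreQm : (1 - ε) ^ 2 ≤ (Matrix.trace (Pᴴ * Qm)).re := by
    have := hQ1
    rwa [hQQm, mE_inner] at this
  -- eigenvalue of Qm
  haveI : Nontrivial (EuclideanSpace ℂ (Fin n)) := by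
    have h : 0 < Module.finrank ℂ (EuclideanSpace ℂ (Fin n)) := by
      rw [finrank_euclideanSpace_fin]; omega
    exact Module.nontrivial_of_finrank_pos h
  set f : Module.End ℂ (EuclideanSpace ℂ (Fin n)) := Matrix.toEuclideanLin Qm with hfdef
  obtain ⟨μ, hμ⟩ := Module.End.exists_eigenvalue f
  have hnottop : Module.End.eigenspace f μ ≠ ⊤ := by
    intro htop
    have hQmscal : Qm = μ • (1 : Matrix (Fin n) (Fin n) ℂ) := by
      apply (Matrix.toEuclideanLin (𝕜 := ℂ) (m := Fin n) (n := Fin n)).injective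
      refine LinearMap.ext fun v => ?_
      have hv : v ∈ Module.End.eigenspace f μ := htop ▸ Submodule.mem_top
      rw [Module.End.mem_eigenspace_iff] at hv
      show f v = Matrix.toEuclideanLin (μ • (1 : Matrix (Fin n) (Fin n) ℂ)) v
      rw [_root_.map_smul, LinearMap.smul_apply, toEuclideanLin_one, hv]
    have htr : μ * n = 1 := by
      have := htrQm
      rw [hQmscal, Matrix.trace_smul, Matrix.trace_one] at this
      simpa [smul_eq_mul, mul_comm] using this
    have hre : (1 - ε) ^ 2 ≤ ((n : ℝ))⁻¹ := by
      have h1 : Matrix.trace (Pᴴ * Qm) = μ := by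
        rw [hQmscal, Matrix.mul_smul, Matrix.mul_one, Matrix.trace_smul,
          Matrix.trace_conjTranspose, htraceP]
        simp
      have h2 : μ = ((n : ℂ))⁻¹ := by
        have hn0 : (n : ℂ) ≠ 0 := Nat.cast_ne_zero.mpr (by omega)
        field_simp at htr ⊢
        linear_combination htr
      have h3 : (Matrix.trace (Pᴴ * Qm)).re = ((n : ℝ))⁻¹ := by
        rw [h1, h2, show ((n : ℂ))⁻¹ = (((n : ℝ)⁻¹ : ℝ) : ℂ) by push_cast; ring,
          Complex.ofReal_re]
      rw [← h3]
      exact hreQm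
    have hn2 : (2 : ℝ) ≤ (n : ℝ) := by exact_mod_cast hn
    have hnpos : (0 : ℝ) < (n : ℝ) := by linarith
    have hinv : ((n : ℝ))⁻¹ * (n : ℝ) = 1 := inv_mul_cancel₀ (ne_of_gt hnpos)
    nlinarith [mul_le_mul_of_nonneg_right hre (le_of_lt hnpos)]
  refine ⟨Module.End.eigenspace f μ, ?_, ?_, ?_⟩
  · haveI : Nontrivial (Module.End.eigenspace f μ) := Submodule.nontrivial_iff_ne_bot.mpr hμ
    exact Module.finrank_pos_iff.mpr this
  · have hle : Module.finrank ℂ (Module.End.eigenspace f μ) ≤ n := by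
      have := Submodule.finrank_le (Module.End.eigenspace f μ)
      rwa [finrank_euclideanSpace_fin] at this
    rcases lt_or_eq_of_le hle with h | h
    · exact h
    · exfalso
      apply hnottop
      apply Submodule.eq_top_of_finrank_eq
      rw [h, finrank_euclideanSpace_fin]
  · intro A hA x hx
    rw [Module.End.mem_eigenspace_iff] at hx ⊢
    have : f (Matrix.toEuclideanLin A x) = Matrix.toEuclideanLin A (f x) := by
      rw [hfdef]
      rw [← toEuclideanLin_mul, ← toEuclideanLin_mul, ← hcomm A hA]
    rw [this, hx]
    exact (Matrix.toEuclideanLin A).map_smul μ x
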